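/- There exists a constant μ₀ = μ₀(A₀, 𝒜, b) > 0 such that if μ := max{λ₂max, λ₃max}/λ₁min ≤ μ₀, then the Tikhonov functional Φ(y,x) = ‖b - A₀x - 𝒜(y,x)‖²_{Γ₁⁻¹} + ‖y‖²_{Γ₂⁻¹} + ‖x‖²_{Γ₃⁻¹} has a unique global minimizer, which lies in an origin-centered ball on which Φ is strictly convex. -/

import Mathlib

open Matrix

namespace TikAux

/-! ### Euclidean norm on pi types -/

noncomputable def en {k : ℕ} (v : Fin k → ℝ) : ℝ :=
  ‖(WithLp.equiv 2 (Fin k → ℝ)).symm v‖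

variable {k p n l : ℕ}

lemma en_nonneg (v : Fin k → ℝ) : 0 ≤ en v := norm_nonneg _

lemma en_sq (v : Fin k → ℝ) : en v ^ 2 = v ⬝ᵥ v := by
  rw [en, ← real_inner_self_eq_norm_sq]
  simp [PiLp.inner_apply, RCLike.inner_apply, dotProduct, mul_comm]
  rw [EuclideanSpace.norm_eq, Real.sq_sqrt (by positivity)]
  simp [Real.norm_eq_abs, sq_abs, sq]

lemma en_add_le (u v : Fin k → ℝ) : en (u + v) ≤ en u + en v := by
  simp only [en, WithLp.equiv_symm_apply, WithLp.toLp_add]; exact norm_add_le _ _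

lemma en_sub_le (u v : Fin k → ℝ) : en (u - v) ≤ en u + en v := by
  simp only [en, WithLp.equiv_symm_apply, WithLp.toLp_sub]; exact norm_sub_le _ _

lemma en_smul (t : ℝ) (v : Fin k → ℝ) : en (t • v) = |t| * en v := by
  simp only [en, WithLp.equiv_symm_apply, WithLp.toLp_smul]; rw [norm_smul]; simp

lemma sup_le_en [NeZero k] (v : Fin k → ℝ) : ‖v‖ ≤ en v := by
  rw [pi_norm_le_iff_of_nonneg (en_nonneg v)]
  intro i
  have h1 : v i * v i ≤ v ⬝ᵥ v := by
    refine Finset.single_le_sum (f := fun j => v j * v j) ?_ (Finset.mem_univ i)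
    intro j _; exact mul_self_nonneg _
  rw [Real.norm_eq_abs, ← Real.sqrt_mul_self_eq_abs]
  calc Real.sqrt (v i * v i) ≤ Real.sqrt (v ⬝ᵥ v) := Real.sqrt_le_sqrt h1
    _ = en v := by rw [← en_sq v, Real.sqrt_sq (en_nonneg v)]

lemma en_le_sup (v : Fin k → ℝ) : en v ≤ Real.sqrt k * ‖v‖ := by
  have h1 : en v ^ 2 ≤ (Real.sqrt k * ‖v‖) ^ 2 := by
    rw [en_sq, mul_pow, Real.sq_sqrt (by positivity : (0:ℝ) ≤ (k:ℝ))]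
    calc v ⬝ᵥ v = ∑ i, v i * v i := rfl
      _ ≤ ∑ _i : Fin k, ‖v‖ ^ 2 := by
          refine Finset.sum_le_sum fun i _ => ?_
          have := norm_le_pi_norm v i
          have h0 : ‖v i‖ * ‖v i‖ ≤ ‖v‖ * ‖v‖ :=
            mul_le_mul this this (norm_nonneg _) (norm_nonneg _)
          calc v i * v i ≤ |v i * v i| := le_abs_self _
            _ = ‖v i‖ * ‖v i‖ := by rw [abs_mul]; rfl
            _ ≤ ‖v‖ ^ 2 := by rw [sq]; exact h0
      _ = k * ‖v‖ ^ 2 := by simp [mul_comm]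
  have h2 : 0 ≤ Real.sqrt k * ‖v‖ := by positivity
  nlinarith [en_nonneg v]

lemma dot_self_nonneg (v : Fin k → ℝ) : 0 ≤ v ⬝ᵥ v := by
  rw [← en_sq]; positivity

lemma dot_self_pos {v : Fin k → ℝ} (h : v ≠ 0) : 0 < v ⬝ᵥ v := by
  rcases lt_or_eq_of_le (dot_self_nonneg v) with h1 | h1
  · exact h1
  · exact absurd (dotProduct_self_eq_zero.mp h1.symm) h

lemma en_le_of_sq_le {v : Fin k → ℝ} {ρ : ℝ} (hρ : 0 ≤ ρ) (h : v ⬝ᵥ v ≤ ρ ^ 2) :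
    en v ≤ ρ := by
  nlinarith [en_sq v, en_nonneg v]

lemma sub_dot_sub_le (u v : Fin k → ℝ) :
    (u - v) ⬝ᵥ (u - v) ≤ 2 * (u ⬝ᵥ u) + 2 * (v ⬝ᵥ v) := by
  have h1 := dot_self_nonneg (u + v)
  simp only [dotProduct_add, add_dotProduct, dotProduct_sub, sub_dotProduct] at h1 ⊢
  have h2 := dotProduct_comm u v
  linarith

/-! ### spectral bounds -/

variable [NeZero k] {A : Matrix (Fin k) (Fin k) ℝ}

lemma aux_iInf_pos (hA : A.PosDef) : 0 < ⨅ i, hA.1.eigenvalues i := by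
  obtain ⟨i, hi⟩ := exists_eq_ciInf_of_finite (f := hA.1.eigenvalues)
  rw [← hi]; exact hA.eigenvalues_pos i

lemma aux_iSup_pos (hA : A.PosDef) : 0 < ⨆ i, hA.1.eigenvalues i := by
  obtain ⟨i, hi⟩ := exists_eq_ciSup_of_finite (f := hA.1.eigenvalues)
  rw [← hi]; exact hA.eigenvalues_pos i

lemma aux_repr (hA : A.PosDef) (v : Fin k → ℝ) :
    ∃ w : Fin k → ℝ, v ⬝ᵥ (A⁻¹ *ᵥ v) = ∑ i, (hA.1.eigenvalues i)⁻¹ * (w i)^2 ∧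
      v ⬝ᵥ v = ∑ i, (w i)^2 := by
  set d := hA.1.eigenvalues with hd
  set U : Matrix (Fin k) (Fin k) ℝ := (hA.1.eigenvectorUnitary : Matrix (Fin k) (Fin k) ℝ) with hU
  have hspec : A = U * diagonal d * star U := by
    have := hA.1.spectral_theorem
    simpa [hU, hd] using this
  have hUU : U * star U = 1 := by simp [hU]
  have hUU' : star U * U = 1 := by simp [hU]
  have hstar : star U = Uᵀ := by
    ext i j
    simp [Matrix.star_eq_conjTranspose, Matrix.conjTranspose_apply]
  have hinv : A⁻¹ = U * diagonal (fun i => (d i)⁻¹) * star U := by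
    apply Matrix.inv_eq_right_inv
    rw [hspec]
    calc U * diagonal d * star U * (U * diagonal (fun i => (d i)⁻¹) * star U)
        = U * diagonal d * (star U * U) * diagonal (fun i => (d i)⁻¹) * star U := by
          noncomm_ring
      _ = U * (diagonal d * diagonal (fun i => (d i)⁻¹)) * star U := by
          rw [hUU']; noncomm_ring
      _ = 1 := by
          rw [Matrix.diagonal_mul_diagonal]
          have : (fun i => d i * (d i)⁻¹) = fun _ => (1:ℝ) := by
            funext i; exact mul_inv_cancel₀ (hA.eigenvalues_pos i).ne'
          rw [this, Matrix.diagonal_one, mul_one, hUU]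
  set w : Fin k → ℝ := star U *ᵥ v with hw
  have hvw : ∀ u : Fin k → ℝ, v ⬝ᵥ (U *ᵥ u) = w ⬝ᵥ u := by
    intro u
    rw [Matrix.dotProduct_mulVec v U, hw, hstar, Matrix.mulVec_transpose]
  refine ⟨w, ?_, ?_⟩
  · have h1 : v ⬝ᵥ (A⁻¹ *ᵥ v)
        = w ⬝ᵥ (diagonal (fun i => (d i)⁻¹) *ᵥ w) := by
      rw [hinv, ← Matrix.mulVec_mulVec, ← Matrix.mulVec_mulVec, hvw]
    rw [h1]
    simp only [dotProduct, Matrix.mulVec_diagonal]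
    exact Finset.sum_congr rfl fun i _ => by ring
  · have hUw : U *ᵥ w = v := by
      rw [hw, Matrix.mulVec_mulVec, hUU, Matrix.one_mulVec]
    have h2 : w ⬝ᵥ w = v ⬝ᵥ v := by rw [← hvw w, hUw]
    rw [← h2]
    simp only [dotProduct]
    exact Finset.sum_congr rfl fun i _ => by ring

lemma quad_inv_le (hA : A.PosDef) (v : Fin k → ℝ) :
    v ⬝ᵥ (A⁻¹ *ᵥ v) ≤ (⨅ i, hA.1.eigenvalues i)⁻¹ * (v ⬝ᵥ v) := by
  obtain ⟨w, h1, h2⟩ := aux_repr hA v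
  rw [h1, h2, Finset.mul_sum]
  refine Finset.sum_le_sum fun i _ => ?_
  have h3 : (0:ℝ) < ⨅ j, hA.1.eigenvalues j := aux_iInf_pos hA
  have h4 : (⨅ j, hA.1.eigenvalues j) ≤ hA.1.eigenvalues i :=
    ciInf_le (Set.Finite.bddBelow (Set.finite_range _)) i
  exact mul_le_mul_of_nonneg_right (inv_anti₀ h3 h4) (sq_nonneg _)

lemma le_quad_inv (hA : A.PosDef) (v : Fin k → ℝ) :
    (⨆ i, hA.1.eigenvalues i)⁻¹ * (v ⬝ᵥ v) ≤ v ⬝ᵥ (A⁻¹ *ᵥ v) := by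
  obtain ⟨w, h1, h2⟩ := aux_repr hA v
  rw [h1, h2, Finset.mul_sum]
  refine Finset.sum_le_sum fun i _ => ?_
  have h4 : hA.1.eigenvalues i ≤ ⨆ j, hA.1.eigenvalues j :=
    le_ciSup (Set.Finite.bddAbove (Set.finite_range _)) i
  exact mul_le_mul_of_nonneg_right (inv_anti₀ (hA.eigenvalues_pos i) h4) (sq_nonneg _)

/-! ### algebraic identities -/

omit [NeZero k]

lemma quad_combo (M : Matrix (Fin k) (Fin k) ℝ) {a b : ℝ} (hab : a + b = 1)
    (u v : Fin k → ℝ) :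
    (a • u + b • v) ⬝ᵥ (M *ᵥ (a • u + b • v))
      = a * (u ⬝ᵥ (M *ᵥ u)) + b * (v ⬝ᵥ (M *ᵥ v))
        - a * b * ((u - v) ⬝ᵥ (M *ᵥ (u - v))) := by
  have hb : b = 1 - a := by linarith
  subst hb
  simp only [Matrix.mulVec_add, Matrix.mulVec_smul, Matrix.mulVec_sub,
    dotProduct_add, add_dotProduct, dotProduct_smul, smul_dotProduct,
    dotProduct_sub, sub_dotProduct, smul_eq_mul]
  ring

lemma quad_add_smul (M : Matrix (Fin k) (Fin k) ℝ) (t : ℝ) (u w : Fin k → ℝ) :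
    (u + t • w) ⬝ᵥ (M *ᵥ (u + t • w))
      = u ⬝ᵥ (M *ᵥ u) + t * (u ⬝ᵥ (M *ᵥ w)) + t * (w ⬝ᵥ (M *ᵥ u))
        + t ^ 2 * (w ⬝ᵥ (M *ᵥ w)) := by
  simp only [Matrix.mulVec_add, Matrix.mulVec_smul,
    dotProduct_add, add_dotProduct, dotProduct_smul, smul_dotProduct, smul_eq_mul]
  ring

lemma self_combo {a b : ℝ} (hab : a + b = 1) (u v : Fin k → ℝ) :
    (a • u + b • v) ⬝ᵥ (a • u + b • v)
      = a * (u ⬝ᵥ u) + b * (v ⬝ᵥ v) - a * b * ((u - v) ⬝ᵥ (u - v)) := by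
  have hb : b = 1 - a := by linarith
  subst hb
  simp only [dotProduct_add, add_dotProduct, dotProduct_smul, smul_dotProduct,
    dotProduct_sub, sub_dotProduct, smul_eq_mul]
  ring

lemma cs_sym {M : Matrix (Fin k) (Fin k) ℝ}
    (hsym : ∀ x y : Fin k → ℝ, x ⬝ᵥ (M *ᵥ y) = y ⬝ᵥ (M *ᵥ x))
    (h0 : ∀ x, 0 ≤ x ⬝ᵥ (M *ᵥ x)) (u v : Fin k → ℝ) :
    (u ⬝ᵥ (M *ᵥ v)) ^ 2 ≤ (u ⬝ᵥ (M *ᵥ u)) * (v ⬝ᵥ (M *ᵥ v)) := by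
  have key : ∀ t : ℝ,
      0 ≤ (v ⬝ᵥ (M *ᵥ v)) * (t * t) + (2 * (u ⬝ᵥ (M *ᵥ v))) * t + (u ⬝ᵥ (M *ᵥ u)) := by
    intro t
    have h := h0 (u + t • v)
    rw [quad_add_smul] at h
    rw [← hsym u v] at h
    nlinarith [h]
  have hd := discrim_le_zero key
  rw [discrim] at hd
  nlinarith

/-! ### boundedness / continuity -/

lemma cont_quad (M : Matrix (Fin k) (Fin k) ℝ) :
    Continuous fun v : Fin k → ℝ => v ⬝ᵥ (M *ᵥ v) := by
  simp only [dotProduct, Matrix.mulVec]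
  refine continuous_finset_sum _ fun i _ => (continuous_apply i).mul ?_
  exact continuous_finset_sum _ fun j _ => continuous_const.mul (continuous_apply j)

lemma inv_symm (hA : A.PosDef) (x y : Fin k → ℝ) :
    x ⬝ᵥ (A⁻¹ *ᵥ y) = y ⬝ᵥ (A⁻¹ *ᵥ x) := by
  have hH : (A⁻¹).IsHermitian := hA.1.inv
  have hT : (A⁻¹)ᵀ = A⁻¹ := by
    have := hH
    rw [Matrix.IsHermitian, Matrix.conjTranspose_eq_transpose_of_trivial] at this
    exact this
  rw [Matrix.dotProduct_mulVec, ← Matrix.mulVec_transpose, hT, dotProduct_comm]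

lemma inv_quad_nonneg (hA : A.PosDef) (x : Fin k → ℝ) :
    0 ≤ x ⬝ᵥ (A⁻¹ *ᵥ x) := by
  have := hA.inv.posSemidef.dotProduct_mulVec_nonneg x
  simpa using this

lemma bilin_bound [NeZero l] [NeZero p] [NeZero n]
    (𝒜 : (Fin p → ℝ) →ₗ[ℝ] (Fin n → ℝ) →ₗ[ℝ] (Fin l → ℝ)) :
    ∃ C : ℝ, 0 ≤ C ∧ Continuous (fun z : (Fin p → ℝ) × (Fin n → ℝ) => 𝒜 z.1 z.2) ∧
      ∀ y x, en (𝒜 y x) ≤ C * en y * en x := by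
  set LA : (Fin p → ℝ) →ₗ[ℝ] ((Fin n → ℝ) →L[ℝ] (Fin l → ℝ)) :=
    (LinearMap.toContinuousLinearMap.toLinearMap).comp 𝒜 with hLA
  set T := LinearMap.toContinuousLinearMap LA with hT
  have hTapp : ∀ y x, T y x = 𝒜 y x := fun y x => rfl
  refine ⟨Real.sqrt l * ‖T‖, by positivity, ?_, ?_⟩
  · have : Continuous fun z : (Fin p → ℝ) × (Fin n → ℝ) => T z.1 z.2 :=
      Continuous.clm_apply (T.continuous.comp continuous_fst) continuous_snd
    simpa [hTapp] using this
  · intro y x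
    have h1 : ‖𝒜 y x‖ ≤ ‖T‖ * ‖y‖ * ‖x‖ := by
      rw [← hTapp]
      calc ‖T y x‖ ≤ ‖T y‖ * ‖x‖ := (T y).le_opNorm x
        _ ≤ ‖T‖ * ‖y‖ * ‖x‖ :=
            mul_le_mul_of_nonneg_right (T.le_opNorm y) (norm_nonneg _)
    calc en (𝒜 y x) ≤ Real.sqrt l * ‖𝒜 y x‖ := en_le_sup _
      _ ≤ Real.sqrt l * (‖T‖ * ‖y‖ * ‖x‖) :=
          mul_le_mul_of_nonneg_left h1 (Real.sqrt_nonneg _)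
      _ ≤ Real.sqrt l * (‖T‖ * en y * en x) := by
          have hy := sup_le_en y
          have hx := sup_le_en x
          have h2 : ‖T‖ * ‖y‖ * ‖x‖ ≤ ‖T‖ * en y * en x := by
            have := mul_le_mul (mul_le_mul_of_nonneg_left hy (norm_nonneg T)) hx
              (norm_nonneg _) (mul_nonneg (norm_nonneg _) (en_nonneg _))
            linarith
          exact mul_le_mul_of_nonneg_left h2 (Real.sqrt_nonneg _)
      _ = Real.sqrt l * ‖T‖ * en y * en x := by ring

lemma mat_bound [NeZero l] [NeZero n] (A₀ : Matrix (Fin l) (Fin n) ℝ) :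
    ∃ C₀ : ℝ, 0 ≤ C₀ ∧ Continuous (fun x : Fin n → ℝ => A₀ *ᵥ x) ∧
      ∀ x, en (A₀ *ᵥ x) ≤ C₀ * en x := by
  set T := LinearMap.toContinuousLinearMap (Matrix.mulVecLin A₀) with hT
  have hTapp : ∀ x, T x = A₀ *ᵥ x := fun x => rfl
  refine ⟨Real.sqrt l * ‖T‖, by positivity, ?_, ?_⟩
  · have := T.continuous
    exact this
  · intro x
    calc en (A₀ *ᵥ x) ≤ Real.sqrt l * ‖A₀ *ᵥ x‖ := en_le_sup _
      _ ≤ Real.sqrt l * (‖T‖ * ‖x‖) := by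
          rw [← hTapp]
          exact mul_le_mul_of_nonneg_left (T.le_opNorm x) (Real.sqrt_nonneg _)
      _ ≤ Real.sqrt l * (‖T‖ * en x) := by
          have hx := sup_le_en x
          exact mul_le_mul_of_nonneg_left
            (mul_le_mul_of_nonneg_left hx (norm_nonneg _)) (Real.sqrt_nonneg _)
      _ = Real.sqrt l * ‖T‖ * en x := by ring

end TikAux

set_option maxHeartbeats 1000000 in
/-- If the prior is strong enough and/or the noise level is high enough (quantified
by `μ ≤ μ₀` for a constant `μ₀` depending only on `A₀`, `𝒜` and `b`), then the
Tikhonov functional has a unique global minimizer, which lies in an origin-centered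
Euclidean ball on which the functional is strictly convex. -/
theorem unique_global_minimizer_of_strong_prior {l p n : ℕ} [NeZero l] [NeZero p] [NeZero n]
    (A₀ : Matrix (Fin l) (Fin n) ℝ) (b : Fin l → ℝ)
    (𝒜 : (Fin p → ℝ) →ₗ[ℝ] (Fin n → ℝ) →ₗ[ℝ] (Fin l → ℝ))
    (h𝒜 : ∃ y₀ x₀, 𝒜 y₀ x₀ ≠ 0) :
    ∃ μ₀ : ℝ, 0 < μ₀ ∧
      ∀ (Γ₁ : Matrix (Fin l) (Fin l) ℝ) (Γ₂ : Matrix (Fin p) (Fin p) ℝ)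
        (Γ₃ : Matrix (Fin n) (Fin n) ℝ)
        (hΓ₁ : Γ₁.PosDef) (hΓ₂ : Γ₂.PosDef) (hΓ₃ : Γ₃.PosDef)
        (Φ : (Fin p → ℝ) × (Fin n → ℝ) → ℝ),
        (∀ y x, Φ (y, x) =
          (b - A₀ *ᵥ x - 𝒜 y x) ⬝ᵥ (Γ₁⁻¹ *ᵥ (b - A₀ *ᵥ x - 𝒜 y x))
          + y ⬝ᵥ (Γ₂⁻¹ *ᵥ y) + x ⬝ᵥ (Γ₃⁻¹ *ᵥ x)) →
        max (⨆ i, hΓ₂.1.eigenvalues i) (⨆ i, hΓ₃.1.eigenvalues i) /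
            (⨅ i, hΓ₁.1.eigenvalues i) ≤ μ₀ →
        ∃ ρ : ℝ,
          StrictConvexOn ℝ
            {z : (Fin p → ℝ) × (Fin n → ℝ) | z.1 ⬝ᵥ z.1 + z.2 ⬝ᵥ z.2 ≤ ρ ^ 2} Φ ∧
          (∃! z : (Fin p → ℝ) × (Fin n → ℝ), ∀ w, Φ z ≤ Φ w) ∧
          (∀ z : (Fin p → ℝ) × (Fin n → ℝ), (∀ w, Φ z ≤ Φ w) →
            z.1 ⬝ᵥ z.1 + z.2 ⬝ᵥ z.2 ≤ ρ ^ 2) := by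
  classical
  obtain ⟨C, hC0, hAcont, hAb⟩ := TikAux.bilin_bound 𝒜
  obtain ⟨C₀, hC₀0, hMcont, hMb⟩ := TikAux.mat_bound A₀
  set nb : ℝ := TikAux.en b with hnbdef
  have hnb0 : 0 ≤ nb := TikAux.en_nonneg b
  have hben : TikAux.en b = nb := hnbdef.symm
  have hnbsq : nb ^ 2 = b ⬝ᵥ b := by rw [hnbdef]; exact TikAux.en_sq b
  set K : ℝ := C * (nb + C₀ + C) + C * C / 4 with hKdef
  have hK0 : 0 ≤ K := by positivity
  set β2 : ℝ := nb ^ 2 + 1 with hβ2def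
  have hβ2pos : 0 < β2 := by positivity
  have hβ2gt : nb ^ 2 < β2 := by rw [hβ2def]; linarith
  set μ₀ : ℝ := min β2⁻¹ (K + 1)⁻¹ with hμ₀def
  have hμ₀pos : 0 < μ₀ := lt_min (by positivity) (by positivity)
  have hμ₀β : μ₀ ≤ β2⁻¹ := min_le_left _ _
  have hμ₀K : μ₀ ≤ (K + 1)⁻¹ := min_le_right _ _
  clear_value nb K β2 μ₀
  refine ⟨μ₀, hμ₀pos, ?_⟩
  intro Γ₁ Γ₂ Γ₃ hΓ₁ hΓ₂ hΓ₃ Φ hΦ hμ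
  set α : ℝ := ⨅ i, hΓ₁.1.eigenvalues i with hαdef
  have hαpos : 0 < α := TikAux.aux_iInf_pos hΓ₁
  set m2 : ℝ := ⨆ i, hΓ₂.1.eigenvalues i with hm2def
  set m3 : ℝ := ⨆ i, hΓ₃.1.eigenvalues i with hm3def
  have hm2pos : 0 < m2 := TikAux.aux_iSup_pos hΓ₂
  have hm3pos : 0 < m3 := TikAux.aux_iSup_pos hΓ₃
  set m : ℝ := max m2 m3 with hmdef
  have hmpos : 0 < m := lt_of_lt_of_le hm2pos (le_max_left _ _)
  -- hμ : m / α ≤ μ₀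
  set ρ : ℝ := Real.sqrt (μ₀ * β2) with hρdef
  have hρ0 : 0 ≤ ρ := Real.sqrt_nonneg _
  have hρsq : ρ ^ 2 = μ₀ * β2 := Real.sq_sqrt (le_of_lt (mul_pos hμ₀pos hβ2pos))
  have hρ2le1 : ρ ^ 2 ≤ 1 := by
    rw [hρsq]
    calc μ₀ * β2 ≤ β2⁻¹ * β2 := mul_le_mul_of_nonneg_right hμ₀β hβ2pos.le
      _ = 1 := inv_mul_cancel₀ hβ2pos.ne'
  have hρle1 : ρ ≤ 1 := by nlinarith only [hρ2le1, hρ0]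
  -- residual
  set r : (Fin p → ℝ) × (Fin n → ℝ) → (Fin l → ℝ) :=
    fun z => b - A₀ *ᵥ z.2 - 𝒜 z.1 z.2 with hrdef
  have hΦ' : ∀ z, Φ z = (r z) ⬝ᵥ (Γ₁⁻¹ *ᵥ r z) + z.1 ⬝ᵥ (Γ₂⁻¹ *ᵥ z.1)
      + z.2 ⬝ᵥ (Γ₃⁻¹ *ᵥ z.2) := by
    intro z
    have := hΦ z.1 z.2
    rw [Prod.mk.eta] at this
    exact this
  -- quadratic form bounds
  have hq1le : ∀ v, v ⬝ᵥ (Γ₁⁻¹ *ᵥ v) ≤ α⁻¹ * (v ⬝ᵥ v) := fun v => TikAux.quad_inv_le hΓ₁ v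
  have hq1pos : ∀ v, 0 ≤ v ⬝ᵥ (Γ₁⁻¹ *ᵥ v) := fun v => TikAux.inv_quad_nonneg hΓ₁ v
  have hminv2 : m⁻¹ ≤ m2⁻¹ := inv_anti₀ hm2pos (le_max_left _ _)
  have hminv3 : m⁻¹ ≤ m3⁻¹ := inv_anti₀ hm3pos (le_max_right _ _)
  have hq2ge : ∀ v, m⁻¹ * (v ⬝ᵥ v) ≤ v ⬝ᵥ (Γ₂⁻¹ *ᵥ v) := fun v =>
    le_trans (mul_le_mul_of_nonneg_right hminv2 (TikAux.dot_self_nonneg v))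
      (TikAux.le_quad_inv hΓ₂ v)
  have hq3ge : ∀ v, m⁻¹ * (v ⬝ᵥ v) ≤ v ⬝ᵥ (Γ₃⁻¹ *ᵥ v) := fun v =>
    le_trans (mul_le_mul_of_nonneg_right hminv3 (TikAux.dot_self_nonneg v))
      (TikAux.le_quad_inv hΓ₃ v)
  clear_value α m2 m3 m
  -- key smallness
  have hKm : K * m < α := by
    have h1 : m / α ≤ (K + 1)⁻¹ := le_trans hμ hμ₀K
    have h2 : m ≤ (K + 1)⁻¹ * α := by
      rw [div_le_iff₀ hαpos] at h1; linarith only [h1]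
    have hKK : K * (K + 1)⁻¹ < 1 := by
      have hlt : K < K + 1 := by linarith only []
      have := (div_lt_one (by linarith only [hK0] : (0:ℝ) < K + 1)).mpr hlt
      rw [div_eq_mul_inv] at this; exact this
    have h6 : K * m ≤ K * ((K + 1)⁻¹ * α) := mul_le_mul_of_nonneg_left h2 hK0
    nlinarith only [h6, mul_pos (sub_pos.mpr hKK) hαpos]
  have hinvKm : α⁻¹ * K < m⁻¹ := by
    have h8 : K / α < 1 / m := (div_lt_div_iff₀ hαpos hmpos).mpr (by linarith only [hKm])
    rw [div_eq_mul_inv, one_div] at h8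
    linarith only [h8]
  -- lower bound on Φ
  have hΦlower : ∀ z, m⁻¹ * (z.1 ⬝ᵥ z.1 + z.2 ⬝ᵥ z.2) ≤ Φ z := by
    intro z
    rw [hΦ' z, mul_add]
    linarith only [hq1pos (r z), hq2ge z.1, hq3ge z.2]
  -- any near-minimizer lies strictly inside the ball
  have hΦ00 : Φ (0, 0) ≤ α⁻¹ * nb ^ 2 := by
    have h0 := hΦ 0 0
    have hr0 : b - A₀ *ᵥ (0 : Fin n → ℝ) - 𝒜 0 0 = b := by simp
    rw [hr0] at h0
    simp only [dotProduct_zero, Matrix.mulVec_zero, add_zero] at h0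
    rw [h0, hnbsq]
    exact hq1le b
  have hball : ∀ z : (Fin p → ℝ) × (Fin n → ℝ), Φ z ≤ Φ (0, 0) →
      z.1 ⬝ᵥ z.1 + z.2 ⬝ᵥ z.2 < ρ ^ 2 := by
    intro z hz
    have h1 := hΦlower z
    have h2 : m⁻¹ * (z.1 ⬝ᵥ z.1 + z.2 ⬝ᵥ z.2) ≤ α⁻¹ * nb ^ 2 := by
      linarith only [h1, hz, hΦ00]
    have h3 : z.1 ⬝ᵥ z.1 + z.2 ⬝ᵥ z.2 ≤ m * (α⁻¹ * nb ^ 2) := by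
      have h4 := mul_le_mul_of_nonneg_left h2 hmpos.le
      have h5 : m * (m⁻¹ * (z.1 ⬝ᵥ z.1 + z.2 ⬝ᵥ z.2)) = z.1 ⬝ᵥ z.1 + z.2 ⬝ᵥ z.2 := by
        rw [← mul_assoc, mul_inv_cancel₀ hmpos.ne', one_mul]
      linarith only [h4, h5]
    have h6 : m * (α⁻¹ * nb ^ 2) = (m / α) * nb ^ 2 := by ring
    have h7 : (m / α) * nb ^ 2 ≤ μ₀ * nb ^ 2 :=
      mul_le_mul_of_nonneg_right hμ (sq_nonneg _)
    have h8 : μ₀ * nb ^ 2 < μ₀ * β2 :=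
      mul_lt_mul_of_pos_left hβ2gt hμ₀pos
    rw [hρsq]; linarith only [h3, h6, h7, h8]
  -- membership facts
  have hmem : ∀ z : (Fin p → ℝ) × (Fin n → ℝ),
      z.1 ⬝ᵥ z.1 + z.2 ⬝ᵥ z.2 ≤ ρ ^ 2 →
      TikAux.en z.1 ≤ ρ ∧ TikAux.en z.2 ≤ ρ := by
    intro z hz
    constructor
    · exact TikAux.en_le_of_sq_le hρ0 (by linarith only [hz, TikAux.dot_self_nonneg z.2])
    · exact TikAux.en_le_of_sq_le hρ0 (by linarith only [hz, TikAux.dot_self_nonneg z.1])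
  have hrbound : ∀ z : (Fin p → ℝ) × (Fin n → ℝ),
      z.1 ⬝ᵥ z.1 + z.2 ⬝ᵥ z.2 ≤ ρ ^ 2 → TikAux.en (r z) ≤ nb + C₀ + C := by
    intro z hz
    obtain ⟨hy, hx⟩ := hmem z hz
    have h1 : TikAux.en (r z) ≤ TikAux.en (b - A₀ *ᵥ z.2) + TikAux.en (𝒜 z.1 z.2) :=
      TikAux.en_sub_le _ _
    have h2 : TikAux.en (b - A₀ *ᵥ z.2) ≤ nb + TikAux.en (A₀ *ᵥ z.2) := by
      have := TikAux.en_sub_le b (A₀ *ᵥ z.2)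
      rw [hben] at this
      exact this
    have h3 := hMb z.2
    have h4 := hAb z.1 z.2
    have hy0 := TikAux.en_nonneg z.1
    have hx0 := TikAux.en_nonneg z.2
    have h5 : C₀ * TikAux.en z.2 ≤ C₀ * 1 := by
      apply mul_le_mul_of_nonneg_left _ hC₀0
      exact le_trans hx hρle1
    have h6 : C * TikAux.en z.1 * TikAux.en z.2 ≤ C * 1 * 1 := by
      have hyle : TikAux.en z.1 ≤ 1 := le_trans hy hρle1
      have hxle : TikAux.en z.2 ≤ 1 := le_trans hx hρle1
      calc C * TikAux.en z.1 * TikAux.en z.2 ≤ C * TikAux.en z.1 * 1 :=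
            mul_le_mul_of_nonneg_left hxle (mul_nonneg hC0 hy0)
        _ ≤ C * 1 * 1 := by
            have h7 : C * TikAux.en z.1 ≤ C * 1 := mul_le_mul_of_nonneg_left hyle hC0
            linarith only [h7]
    linarith only [h1, h2, h3, h4, h5, h6]
  -- convexity of the ball
  set S : Set ((Fin p → ℝ) × (Fin n → ℝ)) :=
    {z | z.1 ⬝ᵥ z.1 + z.2 ⬝ᵥ z.2 ≤ ρ ^ 2} with hSdef
  have hSconv : Convex ℝ S := by
    intro z₁ h₁ z₂ h₂ a b' ha hb hab
    simp only [hSdef, Set.mem_setOf_eq] at h₁ h₂ ⊢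
    have e1 : (a • z₁ + b' • z₂).1 = a • z₁.1 + b' • z₂.1 := rfl
    have e2 : (a • z₁ + b' • z₂).2 = a • z₁.2 + b' • z₂.2 := rfl
    rw [e1, e2, TikAux.self_combo hab, TikAux.self_combo hab]
    have d1 := TikAux.dot_self_nonneg (z₁.1 - z₂.1)
    have d2 := TikAux.dot_self_nonneg (z₁.2 - z₂.2)
    have habρ : a * ρ ^ 2 + b' * ρ ^ 2 = ρ ^ 2 := by
      have h := congrArg (fun t => t * ρ ^ 2) hab
      simpa [add_mul] using h
    linarith only [mul_le_mul_of_nonneg_left h₁ ha, mul_le_mul_of_nonneg_left h₂ hb,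
      mul_nonneg (mul_nonneg ha hb) d1, mul_nonneg (mul_nonneg ha hb) d2, habρ]
  -- strict convexity
  have hstrict : StrictConvexOn ℝ S Φ := by
    refine ⟨hSconv, ?_⟩
    intro z₁ h₁ z₂ h₂ hne a b' ha hb hab
    simp only [hSdef, Set.mem_setOf_eq] at h₁ h₂
    obtain rfl : b' = 1 - a := by linarith only [hab]
    have hab' : a + (1 - a) = 1 := by ring
    set δy := z₁.1 - z₂.1 with hδy
    set δx := z₁.2 - z₂.2 with hδx
    set Dδ : ℝ := δy ⬝ᵥ δy + δx ⬝ᵥ δx with hDδ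
    clear_value Dδ
    have hDδpos : 0 < Dδ := by
      have hor : δy ≠ 0 ∨ δx ≠ 0 := by
        by_contra hcon
        push_neg at hcon
        apply hne
        have hy0 : z₁.1 = z₂.1 := sub_eq_zero.mp hcon.1
        have hx0 : z₁.2 = z₂.2 := sub_eq_zero.mp hcon.2
        exact Prod.ext hy0 hx0
      rcases hor with h | h
      · have h5 := TikAux.dot_self_pos h
        have h6 := TikAux.dot_self_nonneg δx
        rw [hDδ]; linarith only [h5, h6]
      · have h5 := TikAux.dot_self_pos h
        have h6 := TikAux.dot_self_nonneg δy
        rw [hDδ]; linarith only [h5, h6]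
    set c : Fin l → ℝ := 𝒜 δy δx with hc
    clear_value c
    -- midpoint residual identity
    have hmid1 : (a • z₁ + (1-a) • z₂).1 = a • z₁.1 + (1-a) • z₂.1 := rfl
    have hmid2 : (a • z₁ + (1-a) • z₂).2 = a • z₁.2 + (1-a) • z₂.2 := rfl
    have hrmid : r (a • z₁ + (1-a) • z₂)
        = (a • r z₁ + (1-a) • r z₂) + (a * (1-a)) • c := by
      simp only [hrdef, hmid1, hmid2, hc, hδy, hδx]
      simp only [_root_.map_add, _root_.map_smul, _root_.map_sub, LinearMap.add_apply,
        LinearMap.smul_apply, LinearMap.sub_apply, Matrix.mulVec_add, Matrix.mulVec_smul]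
      module
    -- expansions
    have Er : (r (a • z₁ + (1-a) • z₂)) ⬝ᵥ (Γ₁⁻¹ *ᵥ r (a • z₁ + (1-a) • z₂))
        = a * ((r z₁) ⬝ᵥ (Γ₁⁻¹ *ᵥ r z₁)) + (1-a) * ((r z₂) ⬝ᵥ (Γ₁⁻¹ *ᵥ r z₂))
          - a * (1-a) * ((r z₁ - r z₂) ⬝ᵥ (Γ₁⁻¹ *ᵥ (r z₁ - r z₂)))
          + (a * (1-a)) * ((a • r z₁ + (1-a) • r z₂) ⬝ᵥ (Γ₁⁻¹ *ᵥ c))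
          + (a * (1-a)) * (c ⬝ᵥ (Γ₁⁻¹ *ᵥ (a • r z₁ + (1-a) • r z₂)))
          + (a * (1-a)) ^ 2 * (c ⬝ᵥ (Γ₁⁻¹ *ᵥ c)) := by
      rw [hrmid, TikAux.quad_add_smul, TikAux.quad_combo Γ₁⁻¹ hab' (r z₁) (r z₂)]
      all_goals ring
    have Ey : (a • z₁ + (1-a) • z₂).1 ⬝ᵥ (Γ₂⁻¹ *ᵥ (a • z₁ + (1-a) • z₂).1)
        = a * (z₁.1 ⬝ᵥ (Γ₂⁻¹ *ᵥ z₁.1)) + (1-a) * (z₂.1 ⬝ᵥ (Γ₂⁻¹ *ᵥ z₂.1))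
          - a * (1-a) * (δy ⬝ᵥ (Γ₂⁻¹ *ᵥ δy)) := by
      rw [hmid1, TikAux.quad_combo Γ₂⁻¹ hab', hδy]
    have Ex : (a • z₁ + (1-a) • z₂).2 ⬝ᵥ (Γ₃⁻¹ *ᵥ (a • z₁ + (1-a) • z₂).2)
        = a * (z₁.2 ⬝ᵥ (Γ₃⁻¹ *ᵥ z₁.2)) + (1-a) * (z₂.2 ⬝ᵥ (Γ₃⁻¹ *ᵥ z₂.2))
          - a * (1-a) * (δx ⬝ᵥ (Γ₃⁻¹ *ᵥ δx)) := by
      rw [hmid2, TikAux.quad_combo Γ₃⁻¹ hab', hδx]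
    -- bounds on the cross terms
    set s : Fin l → ℝ := a • r z₁ + (1-a) • r z₂ with hs
    clear_value s
    have hens : TikAux.en s ≤ nb + C₀ + C := by
      have h1 : TikAux.en s ≤ TikAux.en (a • r z₁) + TikAux.en ((1-a) • r z₂) := by
        rw [hs]; exact TikAux.en_add_le _ _
      rw [TikAux.en_smul, TikAux.en_smul, abs_of_pos ha, abs_of_pos hb] at h1
      have h4 : a * TikAux.en (r z₁) ≤ a * (nb + C₀ + C) :=
        mul_le_mul_of_nonneg_left (hrbound z₁ h₁) ha.le
      have h5 : (1-a) * TikAux.en (r z₂) ≤ (1-a) * (nb + C₀ + C) :=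
        mul_le_mul_of_nonneg_left (hrbound z₂ h₂) hb.le
      linarith only [h1, h4, h5]
    have hens0 : 0 ≤ TikAux.en s := TikAux.en_nonneg s
    have hDδle : Dδ ≤ 4 * ρ ^ 2 := by
      have h3 := TikAux.sub_dot_sub_le z₁.1 z₂.1
      have h4 := TikAux.sub_dot_sub_le z₁.2 z₂.2
      rw [hDδ, hδy, hδx]; linarith only [h3, h4, h₁, h₂]
    have hDδ4 : Dδ ≤ 4 := by nlinarith only [hDδle, hρ2le1]
    have henc : TikAux.en c ≤ C * (Dδ / 2) := by
      have h1 := hAb δy δx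
      have h2 : TikAux.en δy * TikAux.en δx ≤ Dδ / 2 := by
        nlinarith only [TikAux.en_sq δy, TikAux.en_sq δx,
          sq_nonneg (TikAux.en δy - TikAux.en δx), hDδ]
      have h3 : C * TikAux.en δy * TikAux.en δx ≤ C * (Dδ / 2) := by
        have h7 := mul_le_mul_of_nonneg_left h2 hC0
        linarith only [h7]
      rw [hc]; linarith only [h1, h3]
    have henc0 : 0 ≤ TikAux.en c := TikAux.en_nonneg c
    have hα0 : (0:ℝ) ≤ α⁻¹ := inv_nonneg.mpr hαpos.le
    have hb1 : (TikAux.en s) ^ 2 ≤ (nb + C₀ + C) ^ 2 := by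
      nlinarith only [hens, hens0]
    have hb2 : (TikAux.en c) ^ 2 ≤ (C * (Dδ / 2)) ^ 2 := by
      nlinarith only [henc, henc0]
    have hq1sle : s ⬝ᵥ (Γ₁⁻¹ *ᵥ s) ≤ α⁻¹ * (nb + C₀ + C) ^ 2 := by
      have h2 : s ⬝ᵥ (Γ₁⁻¹ *ᵥ s) ≤ α⁻¹ * (TikAux.en s) ^ 2 := by
        rw [TikAux.en_sq]; exact hq1le s
      have h9 := mul_le_mul_of_nonneg_left hb1 hα0
      linarith only [h2, h9]
    have hq1cle : c ⬝ᵥ (Γ₁⁻¹ *ᵥ c) ≤ α⁻¹ * (C * (Dδ / 2)) ^ 2 := by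
      have h3 : c ⬝ᵥ (Γ₁⁻¹ *ᵥ c) ≤ α⁻¹ * (TikAux.en c) ^ 2 := by
        rw [TikAux.en_sq]; exact hq1le c
      have h9 := mul_le_mul_of_nonneg_left hb2 hα0
      linarith only [h3, h9]
    have hcs : (s ⬝ᵥ (Γ₁⁻¹ *ᵥ c)) ≤ α⁻¹ * ((nb + C₀ + C) * (C * (Dδ / 2))) := by
      have h1 := TikAux.cs_sym (TikAux.inv_symm hΓ₁) (fun x => TikAux.inv_quad_nonneg hΓ₁ x) s c
      have hq1snn := hq1pos s
      have hq1cnn := hq1pos c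
      have hAB : (s ⬝ᵥ (Γ₁⁻¹ *ᵥ s)) * (c ⬝ᵥ (Γ₁⁻¹ *ᵥ c))
          ≤ (α⁻¹ * (nb + C₀ + C) ^ 2) * (α⁻¹ * (C * (Dδ / 2)) ^ 2) :=
        mul_le_mul hq1sle hq1cle hq1cnn
          (mul_nonneg hα0 (sq_nonneg _))
      have h4 : (s ⬝ᵥ (Γ₁⁻¹ *ᵥ c)) ^ 2
          ≤ (α⁻¹ * ((nb + C₀ + C) * (C * (Dδ / 2)))) ^ 2 := by
        nlinarith only [h1, hAB]
      have hR0 : (0:ℝ) ≤ nb + C₀ + C := by linarith only [hnb0, hC₀0, hC0]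
      have hDδ20 : (0:ℝ) ≤ Dδ / 2 := by linarith only [hDδpos]
      have h5 : 0 ≤ α⁻¹ * ((nb + C₀ + C) * (C * (Dδ / 2))) :=
        mul_nonneg hα0 (mul_nonneg hR0 (mul_nonneg hC0 hDδ20))
      nlinarith only [h4, h5]
    have hcs' : (c ⬝ᵥ (Γ₁⁻¹ *ᵥ s)) ≤ α⁻¹ * ((nb + C₀ + C) * (C * (Dδ / 2))) := by
      rw [TikAux.inv_symm hΓ₁ c s]; exact hcs
    have habpos : 0 < a * (1 - a) := mul_pos ha hb
    have hab4 : a * (1 - a) ≤ 1 / 4 := by nlinarith only [sq_nonneg (2 * a - 1)]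
    -- the core strict inequality
    have hcore : (a * (1-a)) * (s ⬝ᵥ (Γ₁⁻¹ *ᵥ c)) + (a * (1-a)) * (c ⬝ᵥ (Γ₁⁻¹ *ᵥ s))
        + (a * (1-a)) ^ 2 * (c ⬝ᵥ (Γ₁⁻¹ *ᵥ c))
        < a * (1-a) * ((r z₁ - r z₂) ⬝ᵥ (Γ₁⁻¹ *ᵥ (r z₁ - r z₂)))
          + a * (1-a) * (δy ⬝ᵥ (Γ₂⁻¹ *ᵥ δy)) + a * (1-a) * (δx ⬝ᵥ (Γ₃⁻¹ *ᵥ δx)) := by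
      have hq1c0 := hq1pos c
      have hinner : (s ⬝ᵥ (Γ₁⁻¹ *ᵥ c)) + (c ⬝ᵥ (Γ₁⁻¹ *ᵥ s))
          + (a * (1-a)) * (c ⬝ᵥ (Γ₁⁻¹ *ᵥ c)) ≤ α⁻¹ * K * Dδ := by
        have h1 : (a * (1-a)) * (c ⬝ᵥ (Γ₁⁻¹ *ᵥ c)) ≤ (1/4) * (α⁻¹ * (C * (Dδ / 2)) ^ 2) := by
          nlinarith only [hab4, hq1cle, hq1c0, habpos]
        have hDδ4' : (0:ℝ) ≤ 4 - Dδ := by linarith only [hDδ4]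
        have hcube : 0 ≤ C * C * Dδ * (4 - Dδ) :=
          mul_nonneg (mul_nonneg (mul_nonneg hC0 hC0) hDδpos.le) hDδ4'
        have h2 : (1/4) * (α⁻¹ * (C * (Dδ / 2)) ^ 2) ≤ α⁻¹ * (C * C / 4) * Dδ := by
          have h7 : (C * (Dδ / 2)) ^ 2 ≤ C * C * Dδ := by nlinarith only [hcube]
          have h9 := mul_le_mul_of_nonneg_left h7 hα0
          nlinarith only [h9, hα0]
        rw [hKdef]
        linarith only [h1, h2, hcs, hcs']
      have hmain : α⁻¹ * K * Dδ < m⁻¹ * Dδ :=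
        mul_lt_mul_of_pos_right hinvKm hDδpos
      have hrhs : m⁻¹ * Dδ ≤ (r z₁ - r z₂) ⬝ᵥ (Γ₁⁻¹ *ᵥ (r z₁ - r z₂))
          + (δy ⬝ᵥ (Γ₂⁻¹ *ᵥ δy)) + (δx ⬝ᵥ (Γ₃⁻¹ *ᵥ δx)) := by
        have t1 := hq1pos (r z₁ - r z₂)
        have t2 := hq2ge δy
        have t3 := hq3ge δx
        rw [hDδ]
        linarith only [t1, t2, t3]
      have hlt : (s ⬝ᵥ (Γ₁⁻¹ *ᵥ c)) + (c ⬝ᵥ (Γ₁⁻¹ *ᵥ s))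
          + (a * (1-a)) * (c ⬝ᵥ (Γ₁⁻¹ *ᵥ c))
          < (r z₁ - r z₂) ⬝ᵥ (Γ₁⁻¹ *ᵥ (r z₁ - r z₂))
          + (δy ⬝ᵥ (Γ₂⁻¹ *ᵥ δy)) + (δx ⬝ᵥ (Γ₃⁻¹ *ᵥ δx)) := by
        linarith only [hinner, hmain, hrhs]
      calc (a * (1-a)) * (s ⬝ᵥ (Γ₁⁻¹ *ᵥ c)) + (a * (1-a)) * (c ⬝ᵥ (Γ₁⁻¹ *ᵥ s))
            + (a * (1-a)) ^ 2 * (c ⬝ᵥ (Γ₁⁻¹ *ᵥ c))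
          = (a * (1-a)) * ((s ⬝ᵥ (Γ₁⁻¹ *ᵥ c)) + (c ⬝ᵥ (Γ₁⁻¹ *ᵥ s))
            + (a * (1-a)) * (c ⬝ᵥ (Γ₁⁻¹ *ᵥ c))) := by ring
        _ < (a * (1-a)) * ((r z₁ - r z₂) ⬝ᵥ (Γ₁⁻¹ *ᵥ (r z₁ - r z₂))
            + (δy ⬝ᵥ (Γ₂⁻¹ *ᵥ δy)) + (δx ⬝ᵥ (Γ₃⁻¹ *ᵥ δx))) :=
            mul_lt_mul_of_pos_left hlt habpos
        _ = a * (1-a) * ((r z₁ - r z₂) ⬝ᵥ (Γ₁⁻¹ *ᵥ (r z₁ - r z₂)))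
            + a * (1-a) * (δy ⬝ᵥ (Γ₂⁻¹ *ᵥ δy)) + a * (1-a) * (δx ⬝ᵥ (Γ₃⁻¹ *ᵥ δx)) := by
            ring
    -- conclude
    rw [hΦ' (a • z₁ + (1-a) • z₂), hΦ' z₁, hΦ' z₂, Er, Ey, Ex]
    simp only [smul_eq_mul]
    linarith only [hcore]
  -- existence of a global minimizer
  have hΦcont : Continuous Φ := by
    have hfun : Φ = fun z => (r z) ⬝ᵥ (Γ₁⁻¹ *ᵥ r z) + z.1 ⬝ᵥ (Γ₂⁻¹ *ᵥ z.1)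
        + z.2 ⬝ᵥ (Γ₃⁻¹ *ᵥ z.2) := funext hΦ'
    rw [hfun]
    have hrc : Continuous r := by
      rw [hrdef]
      exact (continuous_const.sub (hMcont.comp continuous_snd)).sub hAcont
    exact (((TikAux.cont_quad Γ₁⁻¹).comp hrc).add
      ((TikAux.cont_quad Γ₂⁻¹).comp continuous_fst)).add
      ((TikAux.cont_quad Γ₃⁻¹).comp continuous_snd)
  have htend : Filter.Tendsto Φ (Filter.cocompact _) Filter.atTop := by
    have hl : ∀ z : (Fin p → ℝ) × (Fin n → ℝ), m⁻¹ * ‖z‖ ^ 2 ≤ Φ z := by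
      intro z
      have h1 : ‖z‖ ^ 2 ≤ z.1 ⬝ᵥ z.1 + z.2 ⬝ᵥ z.2 := by
        have hy := TikAux.sup_le_en z.1
        have hx := TikAux.sup_le_en z.2
        have hz : ‖z‖ ≤ max (TikAux.en z.1) (TikAux.en z.2) := by
          rw [Prod.norm_def]
          exact max_le_max hy hx
        rcases le_total (TikAux.en z.1) (TikAux.en z.2) with h | h
        · have h9 : ‖z‖ ≤ TikAux.en z.2 := le_trans hz (by simp [max_eq_right h])
          nlinarith only [h9, norm_nonneg z, TikAux.en_sq z.2,
            TikAux.dot_self_nonneg z.1]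
        · have h9 : ‖z‖ ≤ TikAux.en z.1 := le_trans hz (by simp [max_eq_left h])
          nlinarith only [h9, norm_nonneg z, TikAux.en_sq z.1,
            TikAux.dot_self_nonneg z.2]
      have h5 := hΦlower z
      have h6 : m⁻¹ * ‖z‖ ^ 2 ≤ m⁻¹ * (z.1 ⬝ᵥ z.1 + z.2 ⬝ᵥ z.2) :=
        mul_le_mul_of_nonneg_left h1 (inv_nonneg.mpr hmpos.le)
      linarith only [h5, h6]
    apply Filter.tendsto_atTop_mono hl
    have h7 : Filter.Tendsto (fun z : (Fin p → ℝ) × (Fin n → ℝ) => ‖z‖ ^ 2)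
        (Filter.cocompact _) Filter.atTop :=
      (Filter.tendsto_pow_atTop (two_ne_zero)).comp tendsto_norm_cocompact_atTop
    exact h7.const_mul_atTop (inv_pos.mpr hmpos)
  obtain ⟨zmin, hzmin⟩ := hΦcont.exists_forall_le htend
  -- assemble
  refine ⟨ρ, hstrict, ⟨zmin, hzmin, ?_⟩, ?_⟩
  · intro z' hz'
    by_contra hne
    have hm1 : z'.1 ⬝ᵥ z'.1 + z'.2 ⬝ᵥ z'.2 ≤ ρ ^ 2 := (hball z' (hz' (0,0))).le
    have hm2' : zmin.1 ⬝ᵥ zmin.1 + zmin.2 ⬝ᵥ zmin.2 ≤ ρ ^ 2 := (hball zmin (hzmin (0,0))).le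
    have heq : Φ z' = Φ zmin := le_antisymm (hz' zmin) (hzmin z')
    have hmidlt := hstrict.2 hm1 hm2' hne (by norm_num : (0:ℝ) < 1/2)
      (by norm_num : (0:ℝ) < 1/2) (by norm_num)
    have hge := hzmin ((1/2 : ℝ) • z' + (1/2 : ℝ) • zmin)
    rw [heq] at hmidlt
    have hcontr : Φ zmin < Φ zmin := by
      calc Φ zmin ≤ Φ ((1/2 : ℝ) • z' + (1/2 : ℝ) • zmin) := hge
        _ < (1/2) * Φ zmin + (1/2) * Φ zmin := hmidlt
        _ = Φ zmin := by ring
    exact lt_irrefl _ hcontr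
  · intro z hz
    exact (hball z (hz (0,0))).le
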